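/- Let a = (a₁,…,a_r) ∈ ℤ^r be a nonzero vector. Then the set H = {λ ∈ (ℂ*)^r : λ₁^{a₁} ⋯ λ_r^{a_r} = 1} is a closed subgroup of (ℂ*)^r, and the torsion points of (ℂ*)^r lying in H are dense in H for the Zariski topology. -/

import Mathlib

open Complex Finset

/-- The ring of Laurent polynomials `ℂ[t₁^{±1}, …, t_r^{±1}]` in `r` variables. -/
abbrev LaurentRing (r : ℕ) : Type := AddMonoidAlgebra ℂ (Fin r →₀ ℤ)

/-- Evaluation of a Laurent polynomial at a point of the torus `(ℂ*)^r`. -/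
noncomputable def lEval {r : ℕ} (x : Fin r → ℂˣ) (f : LaurentRing r) : ℂ :=
  f.coeff.sum fun d c => c * ∏ i, ((x i : ℂ) ^ (d i))

/-- The character of the torus attached to an integer vector. -/
noncomputable def charU {r : ℕ} (m : Fin r → ℤ) : (Fin r → ℂˣ) →* ℂˣ where
  toFun x := ∏ i, x i ^ m i
  map_one' := by simp
  map_mul' x y := by simp [mul_zpow, Finset.prod_mul_distrib]

lemma charU_apply {r : ℕ} (m : Fin r → ℤ) (x : Fin r → ℂˣ) :
    charU m x = ∏ i, x i ^ m i := rfl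

lemma val_charU {r : ℕ} (m : Fin r → ℤ) (x : Fin r → ℂˣ) :
    ((charU m x : ℂˣ) : ℂ) = ∏ i, ((x i : ℂ) ^ (m i)) := by
  show ((Units.coeHom ℂ) (∏ i, x i ^ m i) : ℂ) = _
  rw [map_prod]
  simp [Units.val_zpow_eq_zpow_val]

/-- A root of unity attached to a rational. -/
noncomputable def eRat (q : ℚ) : ℂˣ :=
  Units.mk0 (Complex.exp (2 * Real.pi * Complex.I * q)) (Complex.exp_ne_zero _)

lemma exp_two_pi_rat_eq_one_iff (c : ℚ) :
    Complex.exp (2 * Real.pi * Complex.I * c) = 1 ↔ ∃ n : ℤ, c = n := by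
  rw [Complex.exp_eq_one_iff]
  constructor
  · rintro ⟨n, hn⟩
    refine ⟨n, ?_⟩
    rw [mul_comm ((n : ℂ)) _] at hn
    have := mul_left_cancel₀ Complex.two_pi_I_ne_zero hn
    exact_mod_cast this
  · rintro ⟨n, hn⟩
    exact ⟨n, by rw [hn]; push_cast; ring⟩

lemma eRat_prod {r : ℕ} (m : Fin r → ℤ) (q : Fin r → ℚ) :
    ((∏ i, eRat (q i) ^ m i : ℂˣ) : ℂ) =
      Complex.exp (2 * Real.pi * Complex.I * ((∑ i, (m i : ℚ) * q i : ℚ) : ℂ)) := by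
  show ((Units.coeHom ℂ) (∏ i, eRat (q i) ^ m i) : ℂ) = _
  rw [map_prod]
  have h1 : ∀ i : Fin r, (Units.coeHom ℂ) (eRat (q i) ^ m i)
      = Complex.exp ((m i : ℂ) * (2 * Real.pi * Complex.I * (q i))) := by
    intro i
    simp only [Units.coeHom_apply, Units.val_zpow_eq_zpow_val, eRat, Units.val_mk0]
    rw [← Complex.exp_int_mul]
  rw [Finset.prod_congr rfl fun i _ => h1 i, ← Complex.exp_sum]
  congr 1
  push_cast
  rw [Finset.mul_sum]
  exact Finset.sum_congr rfl fun i _ => by ring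

lemma eRat_isOfFinOrder (q : ℚ) : IsOfFinOrder (eRat q) := by
  rw [isOfFinOrder_iff_pow_eq_one]
  refine ⟨q.den, q.pos, ?_⟩
  ext
  rw [Units.val_pow_eq_pow_val, Units.val_one]
  show Complex.exp (2 * Real.pi * Complex.I * q) ^ (q.den : ℕ) = 1
  rw [← Complex.exp_nat_mul]
  have : (q.den : ℂ) * (2 * Real.pi * Complex.I * q) = 2 * Real.pi * Complex.I * ((q * q.den : ℚ) : ℂ) := by
    push_cast; ring
  rw [this, Rat.mul_den_eq_num, exp_two_pi_rat_eq_one_iff]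
  exact ⟨q.num, by norm_num⟩

lemma sum_single_ite {r : ℕ} (j : Fin r) (f : Fin r → ℚ) (u : ℚ) :
    ∑ i, f i * (if i = j then u else 0) = f j * u := by
  simp [mul_ite, Finset.sum_ite_eq']

lemma sum_double_ite {r : ℕ} {i j : Fin r} (hij : i ≠ j) (f : Fin r → ℚ) (t u : ℚ) :
    ∑ l, f l * (if l = i then t else if l = j then u else 0) = f i * t + f j * u := by
  have h : ∀ l, f l * (if l = i then t else if l = j then u else 0)
      = (if l = i then f l * t else 0) + (if l = j then f l * u else 0) := by
    intro l
    by_cases hl : l = i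
    · subst hl; simp [hij]
    · by_cases hl2 : l = j <;> simp [hl, hl2, Ne.symm hij]
  rw [Finset.sum_congr rfl fun l _ => h l, Finset.sum_add_distrib]
  simp [Finset.sum_ite_eq']

lemma ratKey {r : ℕ} {a : Fin r → ℤ} (ha : a ≠ 0) (m : Fin r → ℤ)
    (h : ∀ q : Fin r → ℚ, (∃ n : ℤ, ∑ i, (a i : ℚ) * q i = n) →
      ∃ n : ℤ, ∑ i, (m i : ℚ) * q i = n) :
    ∃ k : ℤ, ∀ i, m i = k * a i := by
  obtain ⟨j, haj⟩ := Function.ne_iff.mp ha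
  have haj' : (a j : ℚ) ≠ 0 := by exact_mod_cast haj
  obtain ⟨k, hk⟩ := h (fun i => if i = j then 1 / (a j) else 0)
    ⟨1, by rw [sum_single_ite]; field_simp; norm_num⟩
  rw [_root_.sum_single_ite] at hk
  have hkj : (m j : ℚ) = k * a j := by field_simp at hk; linarith [hk]
  refine ⟨k, fun i => ?_⟩
  by_cases hij : i = j
  · subst hij; exact_mod_cast hkj
  · have hA : ∀ t : ℚ, ∃ n : ℤ, t * ((m i : ℚ) - (a i) * (m j) / (a j)) = n := by
      intro t
      obtain ⟨n, hn⟩ := h (fun l => if l = i then t else if l = j then -(t * a i / a j) else 0)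
        ⟨0, by rw [sum_double_ite hij]; push_cast; field_simp; ring⟩
      rw [sum_double_ite hij] at hn
      refine ⟨n, ?_⟩
      rw [← hn]; field_simp; ring
    set c : ℚ := (m i : ℚ) - a i * m j / a j with hcdef
    have hc : c = 0 := by
      by_contra hc0
      obtain ⟨n, hn⟩ := hA (1 / (2 * c))
      have hc2 : (1 / (2 * c)) * c = 1 / 2 := by field_simp
      rw [hc2] at hn
      have h2 : (2 * n : ℚ) = 1 := by
        field_simp at hn; linarith [hn]
      have h3 : (2 * n : ℤ) = 1 := by exact_mod_cast h2
      omega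
    have hmi : (m i : ℚ) = k * a i := by
      have h4 := sub_eq_zero.mp hc
      rw [hkj] at h4
      rw [h4]
      field_simp
    exact_mod_cast hmi

/-- Any integer vector whose character kills every torsion point of `H` kills all of `H`. -/
lemma annih {r : ℕ} {a : Fin r → ℤ} (ha : a ≠ 0) (m : Fin r → ℤ)
    (hm : ∀ γ : Fin r → ℂˣ, (∀ i, IsOfFinOrder (γ i)) → (∏ i, γ i ^ a i = 1) →
      ∏ i, γ i ^ m i = 1)
    (x : Fin r → ℂˣ) (hx : ∏ i, x i ^ a i = 1) : ∏ i, x i ^ m i = 1 := by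
  have h : ∀ q : Fin r → ℚ, (∃ n : ℤ, ∑ i, (a i : ℚ) * q i = n) →
      ∃ n : ℤ, ∑ i, (m i : ℚ) * q i = n := by
    intro q hq
    have t2 : ∏ i, eRat (q i) ^ a i = 1 := by
      ext
      rw [eRat_prod a q, Units.val_one]
      rw [exp_two_pi_rat_eq_one_iff]
      exact hq
    have := hm (fun i => eRat (q i)) (fun i => eRat_isOfFinOrder (q i)) t2
    have hval : ((∏ i, eRat (q i) ^ m i : ℂˣ) : ℂ) = 1 := by rw [this, Units.val_one]
    rw [eRat_prod m q, exp_two_pi_rat_eq_one_iff] at hval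
    exact hval
  obtain ⟨k, hk⟩ := ratKey ha m h
  calc ∏ i, x i ^ m i = ∏ i, (x i ^ a i) ^ k := by
        refine Finset.prod_congr rfl fun i _ => ?_
        rw [hk i, mul_comm, zpow_mul]
    _ = (∏ i, x i ^ a i) ^ k := by rw [Finset.prod_zpow]
    _ = 1 := by rw [hx, one_zpow]

lemma lEval_single {r : ℕ} (x : Fin r → ℂˣ) (d : Fin r →₀ ℤ) (c : ℂ) :
    lEval x (AddMonoidAlgebra.single d c) = c * ∏ i, ((x i : ℂ) ^ (d i)) := by
  rw [lEval, AddMonoidAlgebra.coeff_single, Finsupp.sum_single_index]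
  simp

lemma lEval_add {r : ℕ} (x : Fin r → ℂˣ) (f g : LaurentRing r) :
    lEval x (f + g) = lEval x f + lEval x g := by
  rw [lEval, lEval, lEval, AddMonoidAlgebra.coeff_add, Finsupp.sum_add_index'] <;> intros <;> simp [add_mul]

/-- Let `a = (a₁,…,a_r) ∈ ℤ^r` be nonzero. Then
`H = {λ ∈ (ℂ*)^r : λ₁^{a₁} ⋯ λ_r^{a_r} = 1}` is a closed subgroup of `(ℂ*)^r`
(a subgroup which is the zero locus of a Laurent polynomial), and the torsion points
of `(ℂ*)^r` lying in `H` are Zariski-dense in `H`: every Laurent polynomial vanishing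
on the torsion points of `H` vanishes on all of `H`. -/
theorem character_kernel_subgroup_torsion_dense (r : ℕ) (a : Fin r → ℤ) (ha : a ≠ 0) :
    (∃ S : Subgroup (Fin r → ℂˣ), (S : Set (Fin r → ℂˣ)) =
        {x : Fin r → ℂˣ | ∏ i, x i ^ a i = 1}) ∧
    (∃ g : LaurentRing r, {x : Fin r → ℂˣ | ∏ i, x i ^ a i = 1} =
        {x : Fin r → ℂˣ | lEval x g = 0}) ∧
    (∀ f : LaurentRing r,
      (∀ x : Fin r → ℂˣ, (∏ i, x i ^ a i = 1) → (∀ i, IsOfFinOrder (x i)) →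
        lEval x f = 0) →
      ∀ x : Fin r → ℂˣ, (∏ i, x i ^ a i = 1) → lEval x f = 0) := by
  classical
  refine ⟨⟨(charU a).ker, ?_⟩,
    ⟨AddMonoidAlgebra.single (Finsupp.equivFunOnFinite.symm a) 1 + AddMonoidAlgebra.single 0 (-1), ?_⟩, ?_⟩
  · ext x
    simp only [SetLike.mem_coe, MonoidHom.mem_ker, Set.mem_setOf_eq, charU_apply]
  · ext x
    have hval : lEval x (AddMonoidAlgebra.single (Finsupp.equivFunOnFinite.symm a) 1
        + AddMonoidAlgebra.single 0 (-1)) = (∏ i, ((x i : ℂ) ^ (a i))) - 1 := by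
      rw [lEval_add, lEval_single, lEval_single]
      simp [sub_eq_add_neg]
    simp only [Set.mem_setOf_eq, hval, sub_eq_zero]
    constructor
    · intro h
      rw [← val_charU, charU_apply, h, Units.val_one]
    · intro h
      have : ((charU a x : ℂˣ) : ℂ) = 1 := by rw [val_charU]; exact h
      have := Units.ext (α := ℂ) (by rw [this, Units.val_one] : ((charU a x : ℂˣ) : ℂ) = ((1 : ℂˣ) : ℂ))
      rwa [charU_apply] at this
  · intro f hf x hx
    -- the subgroup of torsion points of H
    set T : Subgroup (Fin r → ℂˣ) :=
      { carrier := {γ | (∏ i, γ i ^ a i = 1) ∧ ∀ i, IsOfFinOrder (γ i)},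
        mul_mem' := by
          rintro γ δ ⟨hγ2, hγ1⟩ ⟨hδ2, hδ1⟩
          refine ⟨?_, fun i => (hγ1 i).mul (hδ1 i)⟩
          show charU a (γ * δ) = 1
          rw [map_mul, show charU a γ = 1 from hγ2, show charU a δ = 1 from hδ2, mul_one]
        one_mem' := ⟨by simp [charU_apply], fun i => IsOfFinOrder.one⟩
        inv_mem' := by
          rintro γ ⟨hγ2, hγ1⟩
          refine ⟨?_, fun i => (hγ1 i).inv⟩
          show charU a γ⁻¹ = 1
          rw [map_inv, show charU a γ = 1 from hγ2, inv_one] } with hT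
    -- characters of T
    set χ : (Fin r →₀ ℤ) → (T →* ℂ) := fun d =>
      (Units.coeHom ℂ).comp ((charU fun i => d i).comp T.subtype) with hχ
    -- key: characters equal on T are equal at x
    have key : ∀ d e : Fin r →₀ ℤ, χ d = χ e →
        charU (fun i => d i) x = charU (fun i => e i) x := by
      intro d e hde
      have hm : ∀ γ : Fin r → ℂˣ, (∀ i, IsOfFinOrder (γ i)) → (∏ i, γ i ^ a i = 1) →
          ∏ i, γ i ^ (d i - e i) = 1 := by
        intro γ h1 h2
        have hγT : γ ∈ T := ⟨h2, h1⟩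
        have hγ := DFunLike.congr_fun hde (⟨γ, hγT⟩ : T)
        have hu : charU (fun i => d i) γ = charU (fun i => e i) γ := Units.ext hγ
        have hsplit : charU (fun i => d i - e i) γ
            = charU (fun i => d i) γ * (charU (fun i => e i) γ)⁻¹ := by
          show (∏ i, γ i ^ (d i - e i)) = (∏ i, γ i ^ (d i)) * (∏ i, γ i ^ (e i))⁻¹
          rw [← Finset.prod_inv_distrib, ← Finset.prod_mul_distrib]
          exact Finset.prod_congr rfl fun i _ => by rw [zpow_sub]
        show charU (fun i => d i - e i) γ = 1
        rw [hsplit, hu, mul_inv_cancel]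
      have h1 := annih ha (fun i => d i - e i) hm x hx
      calc charU (fun i => d i) x
          = charU (fun i => e i) x * charU (fun i => d i - e i) x := by
            show (∏ i, x i ^ (d i)) = (∏ i, x i ^ (e i)) * ∏ i, x i ^ (d i - e i)
            rw [← Finset.prod_mul_distrib]
            refine Finset.prod_congr rfl fun i _ => ?_
            rw [← zpow_add]
            congr 1
            ring
        _ = charU (fun i => e i) x := by
            rw [show charU (fun i => d i - e i) x = 1 from h1, mul_one]
    -- Artin's linear independence of characters
    have lin := linearIndependent_iff'.mp (linearIndependent_monoidHom T ℂ)
    set s : Finset (T →* ℂ) := f.coeff.support.image χ with hs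
    set b : (T →* ℂ) → ℂ := fun ψ => ∑ d ∈ f.coeff.support.filter (fun d => χ d = ψ), f.coeff d with hb
    have hsum : ∑ ψ ∈ s, b ψ • (⇑ψ : T → ℂ) = 0 := by
      funext γ
      rw [Finset.sum_apply, Pi.zero_apply]
      calc ∑ ψ ∈ s, (b ψ • (⇑ψ : T → ℂ)) γ
          = ∑ ψ ∈ s, ∑ d ∈ f.coeff.support.filter (fun d => χ d = ψ), f.coeff d * χ d γ := by
            refine Finset.sum_congr rfl fun ψ hψ => ?_
            rw [Pi.smul_apply, smul_eq_mul, hb, Finset.sum_mul]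
            exact Finset.sum_congr rfl fun d hd => by
              rw [(Finset.mem_filter.mp hd).2]
        _ = ∑ d ∈ f.coeff.support, f.coeff d * χ d γ :=
            Finset.sum_fiberwise_of_maps_to (fun d hd => Finset.mem_image_of_mem χ hd) _
        _ = lEval (γ : Fin r → ℂˣ) f := by
            rw [lEval, Finsupp.sum]
            refine Finset.sum_congr rfl fun d hd => ?_
            rw [show χ d γ = ((charU (fun i => d i) ((γ : Fin r → ℂˣ)) : ℂˣ) : ℂ) from rfl,
              val_charU]
        _ = 0 := hf _ γ.2.1 γ.2.2
    have hb0 : ∀ ψ ∈ s, b ψ = 0 := fun ψ hψ => lin s b hsum ψ hψ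
    -- conclude
    rw [lEval, Finsupp.sum]
    calc ∑ d ∈ f.coeff.support, f.coeff d * ∏ i, ((x i : ℂ) ^ (d i))
        = ∑ d ∈ f.coeff.support, f.coeff d * ((charU (fun i => d i) x : ℂˣ) : ℂ) := by
          exact Finset.sum_congr rfl fun d _ => by rw [val_charU]
      _ = ∑ ψ ∈ s, ∑ d ∈ f.coeff.support.filter (fun d => χ d = ψ),
            f.coeff d * ((charU (fun i => d i) x : ℂˣ) : ℂ) :=
          (Finset.sum_fiberwise_of_maps_to (fun d hd => Finset.mem_image_of_mem χ hd) _).symm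
      _ = 0 := by
          refine Finset.sum_eq_zero fun ψ hψ => ?_
          obtain ⟨d₀, hd₀s, hd₀⟩ := Finset.mem_image.mp hψ
          calc ∑ d ∈ f.coeff.support.filter (fun d => χ d = ψ),
                f.coeff d * ((charU (fun i => d i) x : ℂˣ) : ℂ)
              = ∑ d ∈ f.coeff.support.filter (fun d => χ d = ψ),
                f.coeff d * ((charU (fun i => d₀ i) x : ℂˣ) : ℂ) := by
                refine Finset.sum_congr rfl fun d hd => ?_
                rw [key d d₀ (by rw [(Finset.mem_filter.mp hd).2, hd₀])]
            _ = b ψ * ((charU (fun i => d₀ i) x : ℂˣ) : ℂ) := by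
                rw [hb, Finset.sum_mul]
            _ = 0 := by rw [hb0 ψ hψ, zero_mul]
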